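/- Fix real numbers θ₂ ≠ 0 and θ₃ ≠ 0, and consider the LINEXP model gradient f(x,θ) = (1, e^{θ₃x}, θ₂ x e^{θ₃x}, x). Then both reduced families f₋₃ = {1, e^{θ₃x}, x} and f₋₄ = {1, e^{θ₃x}, θ₂ x e^{θ₃x}} are Chebyshev systems on ℝ: for any points x₁ < x₂ < x₃, the 3×3 matrices with rows (1, e^{θ₃x_i}, x_i) (respectively (1, e^{θ₃x_i}, θ₂ x_i e^{θ₃x_i})) for i = 1, 2, 3 have nonzero determinant. -/

import Mathlib

open Set

/-- Key lemma: `α + β t + γ e^{a t}` with `a ≠ 0`, `γ ≠ 0` cannot vanish at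
three strictly increasing points. -/
lemma no_three_zeros (a γ α β : ℝ) (ha : a ≠ 0) (hγ : γ ≠ 0)
    (x : Fin 3 → ℝ) (hx : StrictMono x)
    (hz : ∀ i, α + β * x i + γ * Real.exp (a * x i) = 0) : False := by
  set h : ℝ → ℝ := fun t => α + β * t + γ * Real.exp (a * t) with hh
  have hd : ∀ t : ℝ, HasDerivAt h (β + γ * (Real.exp (a * t) * a)) t := by
    intro t
    have h1 : HasDerivAt (fun t : ℝ => a * t) a t := by
      simpa using (hasDerivAt_id t).const_mul a
    have h2 : HasDerivAt (fun t : ℝ => Real.exp (a * t)) (Real.exp (a * t) * a) t :=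
      (Real.hasDerivAt_exp (a * t)).comp t h1
    have h3 : HasDerivAt (fun t : ℝ => β * t) β t := by
      simpa using (hasDerivAt_id t).const_mul β
    have := ((hasDerivAt_const t α).add h3).add (h2.const_mul γ)
    rw [zero_add] at this
    exact this
  have hcont : Continuous h := by
    fun_prop
  have h01 : x 0 < x 1 := hx (by decide)
  have h12 : x 1 < x 2 := hx (by decide)
  -- Rolle on [x0, x1]
  obtain ⟨c₁, hc₁, hc₁'⟩ := exists_hasDerivAt_eq_zero h01 hcont.continuousOn
    ((hz 0).trans (hz 1).symm) (fun t _ => hd t)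
  obtain ⟨c₂, hc₂, hc₂'⟩ := exists_hasDerivAt_eq_zero h12 hcont.continuousOn
    ((hz 1).trans (hz 2).symm) (fun t _ => hd t)
  -- from the two derivative zeros, exp(a c₁) = exp(a c₂)
  have hne : γ * a ≠ 0 := mul_ne_zero hγ ha
  have e1 : γ * a * Real.exp (a * c₁) = -β := by nlinarith [hc₁']
  have e2 : γ * a * Real.exp (a * c₂) = -β := by nlinarith [hc₂']
  have hE : Real.exp (a * c₁) = Real.exp (a * c₂) :=
    mul_left_cancel₀ hne (e1.trans e2.symm)
  have hc : a * c₁ = a * c₂ := Real.exp_injective hE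
  have hcc : c₁ = c₂ := mul_left_cancel₀ ha hc
  have : c₁ < c₂ := lt_trans hc₁.2 hc₂.1
  linarith
  
/-- the reduced gradient families `f₋₃ = {1, e^{θ₃x}, x}` and
`f₋₄ = {1, e^{θ₃x}, θ₂ x e^{θ₃x}}` of the LINEXP model are Chebyshev systems on `ℝ`. -/
theorem stmt19 (θ₂ θ₃ : ℝ) (hθ₂ : θ₂ ≠ 0) (hθ₃ : θ₃ ≠ 0)
    (x : Fin 3 → ℝ) (hx : StrictMono x) :
    (Matrix.of fun i j : Fin 3 =>
      ![fun t => (1 : ℝ),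
        fun t => Real.exp (θ₃ * t),
        fun t => t] j (x i)).det ≠ 0 ∧
    (Matrix.of fun i j : Fin 3 =>
      ![fun t => (1 : ℝ),
        fun t => Real.exp (θ₃ * t),
        fun t => θ₂ * t * Real.exp (θ₃ * t)] j (x i)).det ≠ 0 := by
  have h01 : x 0 < x 1 := hx (by decide)
  have h12 : x 1 < x 2 := hx (by decide)
  constructor
  · intro hdet
    obtain ⟨v, hv, hmv⟩ := (Matrix.exists_mulVec_eq_zero_iff).mpr hdet
    have hi : ∀ i : Fin 3, v 0 + Real.exp (θ₃ * x i) * v 1 + x i * v 2 = 0 := by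
      intro i
      have := congrFun hmv i
      simpa [Matrix.mulVec, dotProduct, Fin.sum_univ_three] using this
    by_cases hv1 : v 1 = 0
    · have e0 := hi 0; have e1 := hi 1; have e2 := hi 2
      rw [hv1] at e0 e1 e2
      simp only [mul_zero, add_zero] at e0 e1 e2
      have hd : v 2 * (x 1 - x 0) = 0 := by linear_combination e1 - e0
      have hv2 : v 2 = 0 := by
        rcases mul_eq_zero.mp hd with h | h
        · exact h
        · linarith
      have hv0 : v 0 = 0 := by linear_combination e0 - x 0 * hv2
      exact hv (by ext i; fin_cases i <;> assumption)
    · exact no_three_zeros θ₃ (v 1) (v 0) (v 2) hθ₃ hv1 x hx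
        (fun i => by have := hi i; linear_combination this)
  · intro hdet
    obtain ⟨v, hv, hmv⟩ := (Matrix.exists_mulVec_eq_zero_iff).mpr hdet
    have hi : ∀ i : Fin 3, v 0 + Real.exp (θ₃ * x i) * v 1
        + θ₂ * x i * Real.exp (θ₃ * x i) * v 2 = 0 := by
      intro i
      have := congrFun hmv i
      simpa [Matrix.mulVec, dotProduct, Fin.sum_univ_three] using this
    -- multiply by exp(-θ₃ x i)
    have hi' : ∀ i : Fin 3, v 1 + (θ₂ * v 2) * x i + v 0 * Real.exp (-θ₃ * x i) = 0 := by
      intro i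
      have h := hi i
      have hexp : Real.exp (θ₃ * x i) ≠ 0 := Real.exp_ne_zero _
      have : Real.exp (-θ₃ * x i) * Real.exp (θ₃ * x i) = 1 := by
        rw [← Real.exp_add]; ring_nf; exact Real.exp_zero
      linear_combination Real.exp (-θ₃ * x i) * h - (v 1 + θ₂ * x i * v 2) * this
    by_cases hv0 : v 0 = 0
    · have e0 := hi' 0; have e1 := hi' 1; have e2 := hi' 2
      rw [hv0] at e0 e1 e2
      simp only [zero_mul, add_zero] at e0 e1 e2
      have hd : (θ₂ * v 2) * (x 1 - x 0) = 0 := by linear_combination e1 - e0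
      have hv2 : θ₂ * v 2 = 0 := by
        rcases mul_eq_zero.mp hd with h | h
        · exact h
        · linarith
      have hv2' : v 2 = 0 := by
        rcases mul_eq_zero.mp hv2 with h | h
        · exact absurd h hθ₂
        · exact h
      have hv1 : v 1 = 0 := by linear_combination e0 - x 0 * hv2
      exact hv (by ext i; fin_cases i <;> assumption)
    · exact no_three_zeros (-θ₃) (v 0) (v 1) (θ₂ * v 2) (neg_ne_zero.mpr hθ₃) hv0 x hx hi'
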